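/- Let G be a finite group, N ⊴ G a normal subgroup with a complement H (so G = N ⋊ H), and χ : N → 𝕋 a one-dimensional character of N that is G-invariant: χ(gng⁻¹) = χ(n) for all g ∈ G, n ∈ N. Then restriction of representations to H induces a bijection between (isomorphism classes of) irreducible complex representations π of G satisfying π(n) = χ(n)·id for all n ∈ N, and (isomorphism classes of) irreducible complex representations of H. -/
import Mathlib


/-- Let `G` be a finite group, `N ⊴ G` with complement `H` (so
`G = N ⋊ H`), and `χ : N → 𝕋` a `G`-invariant one-dimensional character of `N`.  Then
restriction to `H` induces a bijection between isomorphism classes of irreducible complex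
representations of `G` lying over `χ` and isomorphism classes of irreducible complex
representations of `H`.  We spell this out as: (a) the restriction to `H` of an irreducible
representation lying over `χ` is irreducible; (b) two irreducible representations lying over
`χ` with isomorphic restrictions are isomorphic; (c) every irreducible representation of `H`
is the restriction of an irreducible representation of `G` lying over `χ`. -/
theorem stmt17 {G : Type*} [Group G] [Finite G]
    (N H : Subgroup G) [N.Normal] (hc : Subgroup.IsComplement' N H)
    (χ : ↥N →* Circle)
    (hinv : ∀ (g : G) (n : ↥N) (hg : g * (n : G) * g⁻¹ ∈ N),
      χ ⟨g * (n : G) * g⁻¹, hg⟩ = χ n) :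
    -- (a)
    (∀ (V : Type) [AddCommGroup V] [Module ℂ V] [Nontrivial V],
      ∀ π : Representation ℂ G V,
      (∀ n : ↥N, π (n : G) = (χ n : ℂ) • (1 : Module.End ℂ V)) →
      (∀ S : Submodule ℂ V, (∀ g : G, ∀ v ∈ S, π g v ∈ S) → S = ⊥ ∨ S = ⊤) →
      (∀ S : Submodule ℂ V, (∀ h : ↥H, ∀ v ∈ S, π (h : G) v ∈ S) → S = ⊥ ∨ S = ⊤)) ∧
    -- (b)
    (∀ (V V' : Type) [AddCommGroup V] [Module ℂ V] [Nontrivial V]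
        [AddCommGroup V'] [Module ℂ V'] [Nontrivial V'],
      ∀ (π : Representation ℂ G V) (π' : Representation ℂ G V'),
      (∀ n : ↥N, π (n : G) = (χ n : ℂ) • (1 : Module.End ℂ V)) →
      (∀ n : ↥N, π' (n : G) = (χ n : ℂ) • (1 : Module.End ℂ V')) →
      (∀ S : Submodule ℂ V, (∀ g : G, ∀ v ∈ S, π g v ∈ S) → S = ⊥ ∨ S = ⊤) →
      (∀ S : Submodule ℂ V', (∀ g : G, ∀ v ∈ S, π' g v ∈ S) → S = ⊥ ∨ S = ⊤) →
      (∃ e : V ≃ₗ[ℂ] V', ∀ (h : ↥H) (v : V), e (π (h : G) v) = π' (h : G) (e v)) →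
      (∃ e : V ≃ₗ[ℂ] V', ∀ (g : G) (v : V), e (π g v) = π' g (e v))) ∧
    -- (c)
    (∀ (V' : Type) [AddCommGroup V'] [Module ℂ V'] [Nontrivial V'],
      ∀ τ : Representation ℂ ↥H V',
      (∀ S : Submodule ℂ V', (∀ h : ↥H, ∀ v ∈ S, τ h v ∈ S) → S = ⊥ ∨ S = ⊤) →
      ∃ π : Representation ℂ G V',
        (∀ n : ↥N, π (n : G) = (χ n : ℂ) • (1 : Module.End ℂ V')) ∧
        (∀ S : Submodule ℂ V', (∀ g : G, ∀ v ∈ S, π g v ∈ S) → S = ⊥ ∨ S = ⊤) ∧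
        (∀ (h : ↥H) (v : V'), π (h : G) v = τ h v)) := by
  -- decomposition of any `g` as `n * h`
  have hdec : ∀ g : G, ∃ (n : ↥N) (h : ↥H), g = (n : G) * (h : G) := fun g =>
    ⟨⟨(hc.equiv g).1, (hc.equiv g).1.2⟩, ⟨(hc.equiv g).2, (hc.equiv g).2.2⟩,
      (hc.equiv_fst_mul_equiv_snd g).symm⟩
  have key : ∀ (n : ↥N) (h : ↥H),
      hc.equiv ((n : G) * (h : G)) = (⟨(n : G), n.2⟩, ⟨(h : G), h.2⟩) := by
    intro n h
    have := hc.equiv.apply_symm_apply (⟨(n : G), n.2⟩, ⟨(h : G), h.2⟩)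
    rwa [Subgroup.IsComplement.equiv_symm_apply] at this
  refine ⟨?_, ?_, ?_⟩
  · -- (a)
    intro V _ _ _ π hχ hirr S hS
    refine hirr S ?_
    intro g v hv
    obtain ⟨n, h, rfl⟩ := hdec g
    have hmem : π (h : G) v ∈ S := hS h v hv
    rw [map_mul, Module.End.mul_apply, hχ n]
    simpa using S.smul_mem _ hmem
  · -- (b)
    intro V V' _ _ _ _ _ _ π π' hχ hχ' _ _ he
    obtain ⟨e, he⟩ := he
    refine ⟨e, fun g v => ?_⟩
    obtain ⟨n, h, rfl⟩ := hdec g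
    rw [map_mul, map_mul, Module.End.mul_apply, Module.End.mul_apply, hχ n, hχ' n]
    simp [he h v]
  · -- (c)
    intro V' _ _ _ τ hirr
    set ν : G → ↥N := fun g => ⟨(hc.equiv g).1, (hc.equiv g).1.2⟩ with hν
    set η : G → ↥H := fun g => ⟨(hc.equiv g).2, (hc.equiv g).2.2⟩ with hη
    have hνη : ∀ (n : ↥N) (h : ↥H), ν ((n : G) * h) = n ∧ η ((n : G) * h) = h := by
      intro n h
      have hk := key n h
      constructor <;> · apply Subtype.ext; simp only [hν, hη]; rw [hk]
    have hνn : ∀ n : ↥N, ν (n : G) = n := by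
      intro n; have := (hνη n 1).1; simpa using this
    have hηn : ∀ n : ↥N, η (n : G) = 1 := by
      intro n; have := (hνη n 1).2; simpa using this
    have hνh : ∀ h : ↥H, ν (h : G) = 1 := by
      intro h; have := (hνη 1 h).1; simpa using this
    have hηh : ∀ h : ↥H, η (h : G) = h := by
      intro h; have := (hνη 1 h).2; simpa using this
    refine ⟨{ toFun := fun g => (χ (ν g) : ℂ) • (τ (η g)),
              map_one' := ?_, map_mul' := ?_ }, ?_, ?_, ?_⟩
    · have h1 : ν (1 : G) = 1 := by simpa using hνn 1
      have h2 : η (1 : G) = 1 := by simpa using hηn 1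
      simp [h1, h2]
    · intro g₁ g₂
      obtain ⟨n₁, h₁, rfl⟩ := hdec g₁
      obtain ⟨n₂, h₂, rfl⟩ := hdec g₂
      have hcmem : (h₁ : G) * (n₂ : G) * (h₁ : G)⁻¹ ∈ N :=
        (inferInstance : N.Normal).conj_mem _ n₂.2 _
      set c : ↥N := ⟨(h₁ : G) * (n₂ : G) * (h₁ : G)⁻¹, hcmem⟩ with hcdef
      have hprod : ((n₁ : G) * h₁) * ((n₂ : G) * h₂)
          = ((n₁ * c : ↥N) : G) * ((h₁ * h₂ : ↥H) : G) := by
        push_cast [hcdef]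
        group
      have hχc : χ c = χ n₂ := hinv (h₁ : G) n₂ hcmem
      simp only [hprod, (hνη (n₁ * c) (h₁ * h₂)).1, (hνη (n₁ * c) (h₁ * h₂)).2,
        (hνη n₁ h₁).1, (hνη n₁ h₁).2, (hνη n₂ h₂).1, (hνη n₂ h₂).2,
        map_mul, hχc, Circle.coe_mul]
      rw [smul_mul_assoc, mul_smul_comm, smul_smul]
    · intro n
      ext v
      simp [hνn n, hηn n]
    · intro S hS
      refine hirr S ?_
      intro h v hv
      have := hS (h : G) v hv
      simpa [hνh h, hηh h] using this
    · intro h v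
      simp [hνh h, hηh h]
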